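/- Let n ≥ 2, m ≥ 1, and let F : X_n^m → X_n^m be an n-ary network that is d_2-nonexpanding, i.e., for all x, y ∈ X_n^m with d_2(x,y) ≤ 1 one has d_2(F(x), F(y)) ≤ 1, where d_2 is the Euclidean distance. Then d_2(F(x), F(y)) ≤ √m · d_2(x, y) for all x, y ∈ X_n^m. -/

import Mathlib

/-- The state space condition: `x` is a point of `X_n^m`, i.e. every
coordinate lies in `{0, 1, …, n-1}` (viewed inside `ℤ`). -/
def inState (n m : ℕ) (x : Fin m → ℤ) : Prop :=
  ∀ v, 0 ≤ x v ∧ x v ≤ (n : ℤ) - 1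

/-- The Chebyshev distance `d∞(x,y) = max_v |x_v - y_v|`, as a natural number. -/
def dinf {m : ℕ} (x y : Fin m → ℤ) : ℕ :=
  Finset.univ.sup fun v => (x v - y v).natAbs

/-- The one-step function associated to a network `F`:
`h_v(x) = x_v + sgn(f_v(x) - x_v)`. -/
def oneStep {m : ℕ} (F : (Fin m → ℤ) → Fin m → ℤ) (x : Fin m → ℤ) : Fin m → ℤ :=
  fun v => x v + (F x v - x v).sign

/-- The Euclidean distance `d₂(x,y) = (Σ_v |x_v - y_v|²)^(1/2)`, as a real
number. -/
noncomputable def dTwo {m : ℕ} (x y : Fin m → ℤ) : ℝ :=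
  Real.sqrt (∑ v, ((x v : ℝ) - (y v : ℝ)) ^ 2)

lemma dTwo_triangle' {m : ℕ} (x y z : Fin m → ℤ) :
    dTwo x z ≤ dTwo x y + dTwo y z := by
  have key : ∀ a b : Fin m → ℤ,
      dTwo a b = dist ((WithLp.equiv 2 (Fin m → ℝ)).symm fun v => (a v : ℝ))
        ((WithLp.equiv 2 (Fin m → ℝ)).symm fun v => (b v : ℝ)) := by
    intro a b
    rw [EuclideanSpace.dist_eq]
    simp [dTwo, Real.dist_eq, sq_abs, WithLp.equiv_symm_apply]
  rw [key, key, key]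
  exact dist_triangle _ _ _

lemma dTwo_le_dOne (n m : ℕ) (F : (Fin m → ℤ) → Fin m → ℤ)
    (hne : ∀ x y, inState n m x → inState n m y → dTwo x y ≤ 1 →
      dTwo (F x) (F y) ≤ 1) :
    ∀ (k : ℕ) (x y : Fin m → ℤ), inState n m x → inState n m y →
      (∑ v, (x v - y v).natAbs) = k → dTwo (F x) (F y) ≤ k := by
  intro k
  induction k with
  | zero =>
    intro x y hx hy h
    have : x = y := by
      funext v
      have := Finset.sum_eq_zero_iff.mp h v (Finset.mem_univ v)
      omega
    simp [this, dTwo]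
  | succ k ih =>
    intro x y hx hy h
    have hex : ∃ v, x v ≠ y v := by
      by_contra hc
      push_neg at hc
      have : (∑ v, (x v - y v).natAbs) = 0 :=
        Finset.sum_eq_zero fun v _ => by rw [hc v]; simp
      omega
    obtain ⟨v, hv⟩ := hex
    set z : Fin m → ℤ := Function.update x v (x v + (y v - x v).sign) with hz
    have hzv : z v = x v + (y v - x v).sign := Function.update_self _ _ _
    have hzw : ∀ w, w ≠ v → z w = x w := fun w hw => Function.update_of_ne hw _ _
    have hsign : ((y v - x v).sign = 1 ∧ x v < y v) ∨
        ((y v - x v).sign = -1 ∧ y v < x v) := by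
      rcases lt_trichotomy (x v) (y v) with h' | h' | h'
      · exact Or.inl ⟨Int.sign_eq_one_of_pos (by omega), h'⟩
      · omega
      · exact Or.inr ⟨Int.sign_eq_neg_one_of_neg (by omega), h'⟩
    have hzstate : inState n m z := by
      intro w
      rcases eq_or_ne w v with hwv | hw
      · subst hwv
        rw [hzv]
        have h1 := hx w; have h2 := hy w
        rcases hsign with ⟨hs, h'⟩ | ⟨hs, h'⟩ <;> rw [hs] <;> constructor <;> omega
      · rw [hzw w hw]; exact hx w
    have hptw : ∀ w : Fin m, ((x w : ℝ) - (z w : ℝ)) ^ 2 =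
        if w = v then 1 else 0 := by
      intro w
      rcases eq_or_ne w v with hwv | hw
      · subst hwv
        rw [hzv, if_pos rfl]
        rcases hsign with ⟨hs, _⟩ | ⟨hs, _⟩ <;> rw [hs] <;> push_cast <;> ring
      · rw [hzw w hw, if_neg hw]; ring
    have hd1 : dTwo x z ≤ 1 := by
      rw [dTwo, Finset.sum_congr rfl fun w _ => hptw w]
      simp
    have hsum : ∀ w : Fin m,
        (x w - y w).natAbs = (z w - y w).natAbs + (if w = v then 1 else 0) := by
      intro w
      rcases eq_or_ne w v with hwv | hw
      · subst hwv
        rw [hzv, if_pos rfl]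
        rcases hsign with ⟨hs, h'⟩ | ⟨hs, h'⟩ <;> rw [hs] <;> omega
      · rw [hzw w hw, if_neg hw, add_zero]
    have hdz : (∑ w, (z w - y w).natAbs) = k := by
      have : (∑ w, (z w - y w).natAbs) + 1 = k + 1 := by
        rw [← h, Finset.sum_congr rfl fun w _ => hsum w, Finset.sum_add_distrib]
        simp
      omega
    have h2 := hne x z hx hzstate hd1
    have h3 := ih z y hzstate hy hdz
    calc dTwo (F x) (F y) ≤ dTwo (F x) (F z) + dTwo (F z) (F y) := dTwo_triangle' _ _ _
      _ ≤ 1 + k := add_le_add h2 h3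
      _ = (k + 1 : ℕ) := by push_cast; ring

/-- If a network is `d₂`-nonexpanding then
`d₂(F(x), F(y)) ≤ √m · d₂(x, y)` for all states `x, y`. -/
theorem dTwo_nonexpanding_lipschitz (n m : ℕ) (hn : 2 ≤ n) (hm : 1 ≤ m)
    (F : (Fin m → ℤ) → Fin m → ℤ)
    (hF : ∀ x, inState n m x → inState n m (F x))
    (hne : ∀ x y, inState n m x → inState n m y → dTwo x y ≤ 1 →
      dTwo (F x) (F y) ≤ 1) :
    ∀ x y, inState n m x → inState n m y →
      dTwo (F x) (F y) ≤ Real.sqrt m * dTwo x y := by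
  intro x y hx hy
  have hkey := dTwo_le_dOne n m F hne (∑ v, (x v - y v).natAbs) x y hx hy rfl
  refine hkey.trans ?_
  have hcast : ((∑ v, (x v - y v).natAbs : ℕ) : ℝ) = ∑ v, |(x v : ℝ) - (y v : ℝ)| := by
    push_cast [Nat.cast_natAbs]
    rfl
  rw [hcast]
  have hcs : (∑ v, |(x v : ℝ) - (y v : ℝ)|) ^ 2 ≤
      (m : ℝ) * ∑ v, ((x v : ℝ) - (y v : ℝ)) ^ 2 := by
    have := sq_sum_le_card_mul_sum_sq (s := (Finset.univ : Finset (Fin m)))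
      (f := fun v => |(x v : ℝ) - (y v : ℝ)|)
    simpa [sq_abs] using this
  have hnn : 0 ≤ ∑ v, |(x v : ℝ) - (y v : ℝ)| :=
    Finset.sum_nonneg fun v _ => abs_nonneg _
  calc (∑ v, |(x v : ℝ) - (y v : ℝ)|)
      = Real.sqrt ((∑ v, |(x v : ℝ) - (y v : ℝ)|) ^ 2) := (Real.sqrt_sq hnn).symm
    _ ≤ Real.sqrt ((m : ℝ) * ∑ v, ((x v : ℝ) - (y v : ℝ)) ^ 2) := Real.sqrt_le_sqrt hcs
    _ = Real.sqrt m * dTwo x y := by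
        rw [Real.sqrt_mul (by positivity)]; rfl
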